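/- Let u be a binary word of length n ≥ 2 with exactly two 1's, at positions i1 < i2 (1-indexed). If u is in the Ulam set U({0,1}), then i2 - i1 ≤ n/2. -/

import Mathlib

set_option maxRecDepth 4000
/-- disjoint binary digits -/
def Dis (a b : ℕ) : Prop := ∀ i, ¬(a.testBit i ∧ b.testBit i)

lemma dis_zero_right (a : ℕ) : Dis a 0 := by intro i h; simp [Nat.testBit] at h
lemma dis_zero_left (b : ℕ) : Dis 0 b := by intro i h; simp [Nat.testBit] at h

lemma dis_symm {a b : ℕ} (h : Dis a b) : Dis b a := fun i hi => h i ⟨hi.2, hi.1⟩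

lemma dis_decomp (a b : ℕ) : Dis a b ↔ (a % 2 = 0 ∨ b % 2 = 0) ∧ Dis (a/2) (b/2) := by
  constructor
  · intro h
    refine ⟨?_, fun i hi => h (i+1) (by simpa [Nat.testBit_add_one] using hi)⟩
    by_contra hc
    push_neg at hc
    exact h 0 (by simp [Nat.testBit_zero]; omega)
  · rintro ⟨h0, h⟩ i hi
    cases i with
    | zero => simp [Nat.testBit_zero] at hi; omega
    | succ i => exact h i (by simpa [Nat.testBit_add_one] using hi)

lemma dis_pair {a b a₁ b₁ x y : ℕ} (hx : x ≤ 1) (hy : y ≤ 1)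
    (ha : a = 2*a₁+x) (hb : b = 2*b₁+y) :
    Dis a b ↔ (x = 0 ∨ y = 0) ∧ Dis a₁ b₁ := by
  subst ha hb
  rw [dis_decomp]
  have h1 : (2*a₁+x) % 2 = x := by omega
  have h2 : (2*b₁+y) % 2 = y := by omega
  have h3 : (2*a₁+x) / 2 = a₁ := by omega
  have h4 : (2*b₁+y) / 2 = b₁ := by omega
  rw [h1, h2, h3, h4]

/-- solution predicate -/
def Sol (A B G c : ℕ) : Prop := c ≤ G ∧ Dis A c ∧ Dis B (G - c)

/-- K3: if A,B digit-disjoint there is a solution at sum A+B+1 -/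
lemma buildNext : ∀ m A B, A + B ≤ m → Dis A B → ∃ c, Sol A B (A+B+1) c := by
  intro m
  induction m with
  | zero =>
    intro A B hm _
    have hA : A = 0 := by omega
    have hB : B = 0 := by omega
    subst hA hB
    exact ⟨0, by simp, dis_zero_right 0, dis_zero_left 1⟩
  | succ m ih =>
    intro A B hm hAB
    obtain ⟨hxy, h1⟩ := (dis_pair (a₁ := A/2) (b₁ := B/2) (x := A%2) (y := B%2)
      (by omega) (by omega) (by omega) (by omega)).mp hAB
    rcases Nat.eq_zero_or_pos (A % 2 + B % 2) with hpar | hpar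
    · -- both even : take c = B, d = A+1
      refine ⟨B, by omega, hAB, ?_⟩
      have : A + B + 1 - B = 2*(A/2) + 1 := by omega
      rw [this]
      exact (dis_pair (a₁ := B/2) (b₁ := A/2) (x := 0) (y := 1)
        (by omega) (by omega) (by omega) rfl).mpr ⟨Or.inl rfl, dis_symm h1⟩
    · -- one of them odd: lift even solution from below
      obtain ⟨c₁, hc₁le, hc₁A, hc₁B⟩ := ih (A/2) (B/2) (by omega) h1
      refine ⟨2*c₁, by omega, ?_, ?_⟩
      · exact (dis_pair (a₁ := A/2) (b₁ := c₁) (x := A%2) (y := 0)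
          (by omega) (by omega) (by omega) (by omega)).mpr ⟨Or.inr rfl, hc₁A⟩
      · have : A + B + 1 - 2*c₁ = 2*((A/2) + (B/2) + 1 - c₁) + 0 := by omega
        rw [this]
        exact (dis_pair (a₁ := B/2) (b₁ := (A/2) + (B/2) + 1 - c₁) (x := B%2) (y := 0)
          (by omega) (by omega) (by omega) rfl).mpr ⟨Or.inr rfl, hc₁B⟩

/-- K4: a solution at sum A+B-1 yields a solution at sum A+B -/
lemma upFromSub : ∀ m A B c, A + B ≤ m → 1 ≤ A + B → Sol A B (A+B-1) c →
    ∃ c', Sol A B (A+B) c' := by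
  intro m
  induction m with
  | zero => intro A B c hm h1; omega
  | succ m ih =>
    intro A B c hm h1 hsol
    obtain ⟨hcle, hAc, hBd⟩ := hsol
    set d := A + B - 1 - c with hdd
    have hcd : c + d = A + B - 1 := by omega
    obtain ⟨hax, hA1⟩ := (dis_pair (a₁ := A/2) (b₁ := c/2) (x := A%2) (y := c%2)
      (by omega) (by omega) (by omega) (by omega)).mp hAc
    obtain ⟨hby, hB1⟩ := (dis_pair (a₁ := B/2) (b₁ := d/2) (x := B%2) (y := d%2)
      (by omega) (by omega) (by omega) (by omega)).mp hBd
    rcases Nat.eq_zero_or_pos (A % 2) with ha | ha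
    · rcases Nat.eq_zero_or_pos (B % 2) with hb | hb
      · -- a = b = 0, A+B even ≥ 2; c+d odd
        have hsum2 : c % 2 + d % 2 = 1 := by omega
        have hsub : c/2 + d/2 = A/2 + B/2 - 1 := by omega
        have hge : 1 ≤ A/2 + B/2 := by omega
        obtain ⟨c₁', hc₁le, hc₁A, hc₁B⟩ := ih (A/2) (B/2) (c/2) (by omega) hge
          ⟨by omega, hA1, by rw [show A/2+B/2-1-(c/2) = d/2 by omega]; exact hB1⟩
        refine ⟨2*c₁', by omega, ?_, ?_⟩
        · exact (dis_pair (a₁ := A/2) (b₁ := c₁') (x := 0) (y := 0)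
            (by omega) (by omega) (by omega) (by omega)).mpr ⟨Or.inl rfl, hc₁A⟩
        · have : A + B - 2*c₁' = 2*((A/2)+(B/2)-c₁') + 0 := by omega
          rw [this]
          exact (dis_pair (a₁ := B/2) (b₁ := (A/2)+(B/2)-c₁') (x := 0) (y := 0)
            (by omega) (by omega) (by omega) rfl).mpr ⟨Or.inl rfl, by
              rwa [show (A/2)+(B/2)-c₁' = A/2 + B/2 - c₁' from rfl]⟩
      · -- a = 0, b = 1 : x = 0 forced? y=0 forced (b=1), parity: c+d = A+B-1 even
        have hy0 : d % 2 = 0 := by omega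
        have hx0 : c % 2 = 0 := by omega
        refine ⟨c + 1, by omega, ?_, ?_⟩
        · exact (dis_pair (a₁ := A/2) (b₁ := c/2) (x := A%2) (y := 1)
            (by omega) (by omega) (by omega) (by omega)).mpr ⟨Or.inl ha, hA1⟩
        · have : A + B - (c+1) = 2*(d/2) + 0 := by omega
          rw [this]
          exact (dis_pair (a₁ := B/2) (b₁ := d/2) (x := B%2) (y := 0)
            (by omega) (by omega) (by omega) rfl).mpr ⟨Or.inr rfl, hB1⟩
    · -- a = 1 : x = 0 forced; b even (else no solution parity-wise)... 
      have hx0 : c % 2 = 0 := by omega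
      have hb : B % 2 = 0 := by omega
      have hy0 : d % 2 = 0 := by omega
      -- keep c, increase d by 1
      refine ⟨c, by omega, hAc, ?_⟩
      have : A + B - c = 2*(d/2) + 1 := by omega
      rw [this]
      exact (dis_pair (a₁ := B/2) (b₁ := d/2) (x := B%2) (y := 1)
        (by omega) (by omega) (by omega) rfl).mpr ⟨Or.inl hb, hB1⟩

/-- Master lemma: at or above the boundary G = A+B, any solution is either the
canonical boundary solution c = B (with G = A+B), or there is a second solution. -/
lemma master : ∀ m A B G c, A + B + G ≤ m → A + B ≤ G → Sol A B G c →
    (G = A + B ∧ c = B) ∨ ∃ c', Sol A B G c' ∧ c' ≠ c := by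
  intro m
  induction m with
  | zero =>
    intro A B G c hm hle hsol
    left
    have : A = 0 ∧ B = 0 ∧ G = 0 := by omega
    obtain ⟨hA, hB, hG⟩ := this
    obtain ⟨hc, _, _⟩ := hsol
    omega
  | succ m ih =>
    intro A B G c hm hle hsol
    obtain ⟨hcle, hAc, hBd⟩ := hsol
    set d := G - c with hdd
    have hcd : c + d = G := by omega
    obtain ⟨hax, hA1⟩ := (dis_pair (a₁ := A/2) (b₁ := c/2) (x := A%2) (y := c%2)
      (by omega) (by omega) (by omega) (by omega)).mp hAc
    obtain ⟨hby, hB1⟩ := (dis_pair (a₁ := B/2) (b₁ := d/2) (x := B%2) (y := d%2)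
      (by omega) (by omega) (by omega) (by omega)).mp hBd
    rcases Nat.eq_zero_or_pos (G % 2) with hg | hg
    · -- G even
      rcases Nat.eq_zero_or_pos (c % 2) with hx | hx
      · -- x = 0, hence y = 0, c₁ + d₁ = G₁ ≥ A₁ + B₁
        have hy : d % 2 = 0 := by omega
        have hsub : c/2 + d/2 = G/2 := by omega
        have hsuble : A/2 + B/2 ≤ G/2 := by omega
        rcases ih (A/2) (B/2) (G/2) (c/2) (by omega) hsuble
          ⟨by omega, hA1, by rw [show G/2 - c/2 = d/2 by omega]; exact hB1⟩ with hbdy | ⟨c₁', ⟨hle', hA', hB'⟩, hne'⟩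
        · -- boundary downstairs: forces a = b = 0, G = A+B, c = B
          obtain ⟨hGeq, hceq⟩ := hbdy
          left
          constructor <;> omega
        · -- lift second solution
          right
          refine ⟨2*c₁', ⟨by omega, ?_, ?_⟩, by omega⟩
          · exact (dis_pair (a₁ := A/2) (b₁ := c₁') (x := A%2) (y := 0)
              (by omega) (by omega) (by omega) (by omega)).mpr ⟨Or.inr rfl, hA'⟩
          · have : G - 2*c₁' = 2*(G/2 - c₁') + 0 := by omega
            rw [this]
            exact (dis_pair (a₁ := B/2) (b₁ := G/2 - c₁') (x := B%2) (y := 0)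
              (by omega) (by omega) (by omega) rfl).mpr ⟨Or.inr rfl, hB'⟩
      · -- x = 1, y = 1, a = b = 0, c₁ + d₁ = G₁ - 1
        have hy : d % 2 = 1 := by omega
        have ha : A % 2 = 0 := by omega
        have hb : B % 2 = 0 := by omega
        have hG1 : 1 ≤ G/2 := by omega
        have hsub : c/2 + d/2 = G/2 - 1 := by omega
        rcases Nat.lt_or_ge (A/2 + B/2) (G/2 - 1 + 1) with hstrict | hbound
        · -- G₁ - 1 ≥ A₁ + B₁ : apply IH at G₁ - 1
          rcases ih (A/2) (B/2) (G/2 - 1) (c/2) (by omega) (by omega)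
            ⟨by omega, hA1, by rw [show G/2 - 1 - c/2 = d/2 by omega]; exact hB1⟩ with hbdy | ⟨c₁', ⟨hle', hA', hB'⟩, hne'⟩
          · -- boundary: G₁ - 1 = A₁+B₁, c₁ = B₁, so Dis A₁ B₁; build even solution at G₁
            obtain ⟨hGeq, hceq⟩ := hbdy
            have hdisAB : Dis (A/2) (B/2) := by rw [hceq] at hA1; exact hA1
            obtain ⟨c₁'', hle'', hA'', hB''⟩ := buildNext (A/2 + B/2) (A/2) (B/2) le_rfl hdisAB
            right
            refine ⟨2*c₁'', ⟨by omega, ?_, ?_⟩, by omega⟩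
            · exact (dis_pair (a₁ := A/2) (b₁ := c₁'') (x := 0) (y := 0)
                (by omega) (by omega) (by omega) (by omega)).mpr ⟨Or.inl rfl, hA''⟩
            · have : G - 2*c₁'' = 2*(A/2 + B/2 + 1 - c₁'') + 0 := by omega
              rw [this]
              exact (dis_pair (a₁ := B/2) (b₁ := A/2 + B/2 + 1 - c₁'') (x := 0) (y := 0)
                (by omega) (by omega) (by omega) rfl).mpr ⟨Or.inl rfl, hB''⟩
          · -- lift odd second solution
            right
            refine ⟨2*c₁' + 1, ⟨by omega, ?_, ?_⟩, by omega⟩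
            · exact (dis_pair (a₁ := A/2) (b₁ := c₁') (x := 0) (y := 1)
                (by omega) (by omega) (by omega) (by omega)).mpr ⟨Or.inl rfl, hA'⟩
            · have : G - (2*c₁' + 1) = 2*(G/2 - 1 - c₁') + 1 := by omega
              rw [this]
              exact (dis_pair (a₁ := B/2) (b₁ := G/2 - 1 - c₁') (x := 0) (y := 1)
                (by omega) (by omega) (by omega) rfl).mpr ⟨Or.inl rfl, hB'⟩
        · -- G = A + B : solution below boundary downstairs, use upFromSub
          have hG2 : G/2 = A/2 + B/2 := by omega
          obtain ⟨c₁'', hle'', hA'', hB''⟩ := upFromSub (A/2 + B/2) (A/2) (B/2) (c/2) le_rfl (by omega)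
            ⟨by omega, hA1, by rw [show A/2 + B/2 - 1 - c/2 = d/2 by omega]; exact hB1⟩
          right
          refine ⟨2*c₁'', ⟨by omega, ?_, ?_⟩, by omega⟩
          · exact (dis_pair (a₁ := A/2) (b₁ := c₁'') (x := 0) (y := 0)
              (by omega) (by omega) (by omega) (by omega)).mpr ⟨Or.inl rfl, hA''⟩
          · have : G - 2*c₁'' = 2*(A/2 + B/2 - c₁'') + 0 := by omega
            rw [this]
            exact (dis_pair (a₁ := B/2) (b₁ := A/2 + B/2 - c₁'') (x := 0) (y := 0)
              (by omega) (by omega) (by omega) rfl).mpr ⟨Or.inl rfl, hB''⟩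
    · -- G odd : exactly one of x,y is 1
      rcases Nat.eq_zero_or_pos (c % 2) with hx | hx
      · -- x = 0, y = 1, so b = 0; c₁ + d₁ = G₁
        have hy : d % 2 = 1 := by omega
        have hb : B % 2 = 0 := by omega
        have hsub : c/2 + d/2 = G/2 := by omega
        rcases ih (A/2) (B/2) (G/2) (c/2) (by omega) (by omega)
          ⟨by omega, hA1, by rw [show G/2 - c/2 = d/2 by omega]; exact hB1⟩ with hbdy | ⟨c₁', ⟨hle', hA', hB'⟩, hne'⟩
        · obtain ⟨hGeq, hceq⟩ := hbdy
          have hdisAB : Dis (A/2) (B/2) := by rw [hceq] at hA1; exact hA1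
          rcases Nat.eq_zero_or_pos (A % 2) with ha | ha
          · -- a = 0 : G = A+B+1, second solution c+1 = 2*B₁+1
            right
            refine ⟨c + 1, ⟨by omega, ?_, ?_⟩, by omega⟩
            · exact (dis_pair (a₁ := A/2) (b₁ := c/2) (x := 0) (y := 1)
                (by omega) (by omega) (by omega) (by omega)).mpr ⟨Or.inl rfl, hA1⟩
            · have : G - (c+1) = 2*(A/2) + 0 := by omega
              rw [this]
              exact (dis_pair (a₁ := B/2) (b₁ := A/2) (x := 0) (y := 0)
                (by omega) (by omega) (by omega) rfl).mpr ⟨Or.inl rfl, dis_symm hdisAB⟩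
          · -- a = 1 : G = A + B and c = B
            left
            constructor <;> omega
        · -- lift
          right
          refine ⟨2*c₁', ⟨by omega, ?_, ?_⟩, by omega⟩
          · exact (dis_pair (a₁ := A/2) (b₁ := c₁') (x := A%2) (y := 0)
              (by omega) (by omega) (by omega) (by omega)).mpr ⟨Or.inr rfl, hA'⟩
          · have : G - 2*c₁' = 2*(G/2 - c₁') + 1 := by omega
            rw [this]
            exact (dis_pair (a₁ := B/2) (b₁ := G/2 - c₁') (x := 0) (y := 1)
              (by omega) (by omega) (by omega) rfl).mpr ⟨Or.inl rfl, hB'⟩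
      · -- x = 1, y = 0, a = 0; c₁ + d₁ = G₁
        have hy : d % 2 = 0 := by omega
        have ha : A % 2 = 0 := by omega
        have hsub : c/2 + d/2 = G/2 := by omega
        rcases ih (A/2) (B/2) (G/2) (c/2) (by omega) (by omega)
          ⟨by omega, hA1, by rw [show G/2 - c/2 = d/2 by omega]; exact hB1⟩ with hbdy | ⟨c₁', ⟨hle', hA', hB'⟩, hne'⟩
        · obtain ⟨hGeq, hceq⟩ := hbdy
          have hdisAB : Dis (A/2) (B/2) := by rw [hceq] at hA1; exact hA1
          rcases Nat.eq_zero_or_pos (B % 2) with hb | hb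
          · -- b = 0 : G = A+B+1, second solution c - 1 = 2*B₁
            right
            refine ⟨c - 1, ⟨by omega, ?_, ?_⟩, by omega⟩
            · exact (dis_pair (a₁ := A/2) (b₁ := c/2) (x := 0) (y := 0)
                (by omega) (by omega) (by omega) (by omega)).mpr ⟨Or.inl rfl, hA1⟩
            · have : G - (c-1) = 2*(A/2) + 1 := by omega
              rw [this]
              exact (dis_pair (a₁ := B/2) (b₁ := A/2) (x := 0) (y := 1)
                (by omega) (by omega) (by omega) rfl).mpr ⟨Or.inl rfl, dis_symm hdisAB⟩
          · -- b = 1 : G = A + B and c = B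
            left
            constructor <;> omega
        · -- lift
          right
          refine ⟨2*c₁' + 1, ⟨by omega, ?_, ?_⟩, by omega⟩
          · exact (dis_pair (a₁ := A/2) (b₁ := c₁') (x := 0) (y := 1)
              (by omega) (by omega) (by omega) (by omega)).mpr ⟨Or.inl rfl, hA'⟩
          · have : G - (2*c₁' + 1) = 2*(G/2 - c₁') + 0 := by omega
            rw [this]
            exact (dis_pair (a₁ := B/2) (b₁ := G/2 - c₁') (x := B%2) (y := 0)
              (by omega) (by omega) (by omega) rfl).mpr ⟨Or.inr rfl, hB'⟩

/-! ### Word definitions -/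

def w1 (a b : ℕ) : List Bool :=
  List.replicate a false ++ true :: List.replicate b false

def w2 (A G B : ℕ) : List Bool :=
  List.replicate A false ++ true :: (List.replicate G false ++ true :: List.replicate B false)

lemma w1_succ_left (a b : ℕ) : w1 (a+1) b = false :: w1 a b := by
  simp [w1, List.replicate_succ]

lemma w1_succ_right (a b : ℕ) : w1 a (b+1) = w1 a b ++ [false] := by
  unfold w1
  rw [List.replicate_succ' (n := b) (a := false)]
  rw [List.append_assoc]
  rfl

lemma w1_length (a b : ℕ) : (w1 a b).length = a + b + 1 := by
  simp [w1]; omega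

lemma w1_count (a b : ℕ) : (w1 a b).count true = 1 := by
  simp [w1, List.count_cons, List.count_replicate]

lemma true_mem_w1 (a b : ℕ) : true ∈ w1 a b := by simp [w1]

lemma w1_ne_falsesingle (a b : ℕ) : w1 a b ≠ [false] := by
  intro h
  have := true_mem_w1 a b
  rw [h] at this
  simp at this

lemma w1_append (A c d B : ℕ) : w1 A c ++ w1 d B = w2 A (c + d) B := by
  unfold w1 w2
  rw [List.replicate_add]
  simp only [List.cons_append, List.append_assoc]

lemma w1_inj : ∀ a {b a' b' : ℕ}, w1 a b = w1 a' b' → a = a' ∧ b = b' := by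
  intro a
  induction a with
  | zero =>
    intro b a' b' h
    cases a' with
    | zero =>
      simp only [w1, List.replicate, List.nil_append, List.cons.injEq] at h
      have := congrArg List.length h.2
      simp at this
      exact ⟨rfl, by omega⟩
    | succ a' =>
      rw [w1_succ_left] at h
      simp [w1] at h
  | succ a ih =>
    intro b a' b' h
    cases a' with
    | zero =>
      rw [w1_succ_left] at h
      simp [w1] at h
    | succ a' =>
      rw [w1_succ_left, w1_succ_left] at h
      obtain ⟨h1, h2⟩ := ih (List.cons_injective h)
      exact ⟨by omega, h2⟩

lemma w2_succ_left (A G B : ℕ) : w2 (A+1) G B = false :: w2 A G B := by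
  simp [w2, List.replicate_succ]

lemma w2_snoc (A G B : ℕ) : w2 A G (B+1) = w2 A G B ++ [false] := by
  simp [w2, List.replicate_succ' (n := B) (a := false)]

lemma w2_snoc0 (A G : ℕ) : w2 A G 0 = w1 A G ++ [true] := by
  simp [w1, w2]

lemma w2_length (A G B : ℕ) : (w2 A G B).length = A + G + B + 2 := by
  simp [w2]; omega

lemma w2_count (A G B : ℕ) : (w2 A G B).count true = 2 := by
  simp [w2, List.count_cons, List.count_replicate]

lemma all_false_of_count {p : List Bool} (h : p.count true = 0) :
    ∀ x ∈ p, x = false := by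
  intro x hx
  cases x
  · rfl
  · exact absurd hx (List.count_eq_zero.mp h)

lemma rev_replicate_split {p q : List Bool} {k : ℕ} (h : p ++ q = List.replicate k false) :
    p = List.replicate p.length false ∧ q = List.replicate q.length false ∧
      p.length + q.length = k := by
  have hall : ∀ x ∈ p ++ q, x = false := by
    intro x hx; rw [h] at hx; exact List.eq_of_mem_replicate hx
  refine ⟨List.eq_replicate_length.mpr fun x hx => hall x (by simp [hx]),
    List.eq_replicate_length.mpr fun x hx => hall x (by simp [hx]), ?_⟩
  have := congrArg List.length h
  simpa using this

/-- `U` is the Ulam set `U({0,1})` of nonempty binary words: it contains the two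
length-one words `0` and `1`, and a word of length at least `2` is in `U` iff it has
exactly one representation as the concatenation of two distinct words of `U`. -/
def IsUlamFamily (U : Set (List Bool)) : Prop :=
  ∀ u : List Bool, u ∈ U ↔
    (u = [false] ∨ u = [true] ∨
      (2 ≤ u.length ∧ ∃! p : List Bool × List Bool,
        p.1 ∈ U ∧ p.2 ∈ U ∧ p.1 ≠ p.2 ∧ p.1 ++ p.2 = u))

section Ulam

variable {U : Set (List Bool)} (hU : IsUlamFamily U)
include hU

lemma mem_false : [false] ∈ U := (hU _).mpr (Or.inl rfl)

lemma mem_true : [true] ∈ U := (hU _).mpr (Or.inr (Or.inl rfl))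

lemma ne_nil {w : List Bool} (hw : w ∈ U) : w ≠ [] := by
  rcases (hU w).mp hw with h | h | ⟨hlen, _⟩
  · subst h; simp
  · subst h; simp
  · intro h; rw [h] at hlen; simp at hlen

lemma all_false_mem {w : List Bool} (hw : w ∈ U) (hall : ∀ x ∈ w, x = false) :
    w = [false] := by
  obtain ⟨n, hn⟩ : ∃ n, w.length ≤ n := ⟨w.length, le_rfl⟩
  induction n generalizing w with
  | zero =>
    exact absurd (List.length_eq_zero_iff.mp (by omega)) (ne_nil hU hw)
  | succ n ih =>
    rcases (hU w).mp hw with h | h | ⟨hlen, ⟨p, q⟩, ⟨hp, hq, hne, heq⟩, _⟩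
    · exact h
    · exact absurd (hall true (by rw [h]; simp)) (by simp)
    · exfalso
      have hpne := ne_nil hU hp
      have hqne := ne_nil hU hq
      have hlenadd : p.length + q.length = w.length := by
        rw [← heq]; simp
      have hple : p.length ≤ n := by
        have : 1 ≤ q.length := List.length_pos_iff.mpr hqne
        omega
      have hqle : q.length ≤ n := by
        have : 1 ≤ p.length := List.length_pos_iff.mpr hpne
        omega
      have hpf : p = [false] := ih hp (fun x hx => hall x (by rw [← heq]; simp [hx])) hple
      have hqf : q = [false] := ih hq (fun x hx => hall x (by rw [← heq]; simp [hx])) hqle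
      exact hne (hpf.trans hqf.symm)

lemma count_true_eq_zero_mem {w : List Bool} (hw : w ∈ U) (h : w.count true = 0) :
    w = [false] :=
  all_false_mem hU hw (all_false_of_count h)

/-- classification of representations of a one-one word -/
lemma w1_rep {a b : ℕ} {p q : List Bool} (hp : p ∈ U) (hq : q ∈ U)
    (h : p ++ q = w1 a b) :
    (p = [false] ∧ 1 ≤ a ∧ q = w1 (a-1) b) ∨
    (q = [false] ∧ 1 ≤ b ∧ p = w1 a (b-1)) := by
  have hcount : p.count true + q.count true = 1 := by
    have := congrArg (List.count true) h
    rw [List.count_append, w1_count] at this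
    exact this
  rcases Nat.eq_zero_or_pos (p.count true) with hp0 | hp1
  · left
    have hpf : p = [false] := count_true_eq_zero_mem hU hp hp0
    subst hpf
    cases a with
    | zero =>
      exfalso
      simp [w1] at h
    | succ a =>
      rw [w1_succ_left] at h
      simp only [List.cons_append, List.nil_append, List.cons.injEq] at h
      exact ⟨rfl, by omega, by simpa using h.2⟩
  · right
    have hq0 : q.count true = 0 := by omega
    have hqf : q = [false] := count_true_eq_zero_mem hU hq hq0
    subst hqf
    cases b with
    | zero =>
      exfalso
      have h0 : w1 a 0 = List.replicate a false ++ [true] := by simp [w1]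
      rw [h0] at h
      have := (List.append_inj' h (by simp)).2
      simp at this
    | succ b =>
      rw [w1_succ_right] at h
      have := List.append_cancel_right h
      exact ⟨rfl, by omega, by simpa using this⟩

lemma w1_mem_rec {a b : ℕ} (h1 : 1 ≤ a + b) :
    w1 a b ∈ U ↔ Xor' (1 ≤ a ∧ w1 (a-1) b ∈ U) (1 ≤ b ∧ w1 a (b-1) ∈ U) := by
  constructor
  · intro hmem
    rcases (hU _).mp hmem with h | h | ⟨hlen, ⟨p, q⟩, ⟨hp, hq, hne, heq⟩, huniq⟩
    · exact absurd h (w1_ne_falsesingle a b)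
    · have := congrArg List.length h
      rw [w1_length] at this
      simp at this
      omega
    · rcases w1_rep hU hp hq heq with ⟨hpf, ha, hqe⟩ | ⟨hqf, hb, hpe⟩
      · left
        refine ⟨⟨ha, hqe ▸ hq⟩, ?_⟩
        rintro ⟨hb, hmem'⟩
        have hvalid : (w1 a (b-1), ([false] : List Bool)).1 ∈ U ∧
            (w1 a (b-1), ([false] : List Bool)).2 ∈ U ∧
            (w1 a (b-1), ([false] : List Bool)).1 ≠ (w1 a (b-1), ([false] : List Bool)).2 ∧
            (w1 a (b-1), ([false] : List Bool)).1 ++ (w1 a (b-1), ([false] : List Bool)).2 = w1 a b := by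
          refine ⟨hmem', mem_false hU, w1_ne_falsesingle _ _, ?_⟩
          have : w1 a (b-1+1) = w1 a (b-1) ++ [false] := w1_succ_right a (b-1)
          rw [show b - 1 + 1 = b by omega] at this
          exact this.symm
        have := huniq _ hvalid
        rw [Prod.ext_iff] at this
        simp only at this
        exact w1_ne_falsesingle a (b-1) (this.1.trans hpf)
      · right
        refine ⟨⟨hb, hpe ▸ hp⟩, ?_⟩
        rintro ⟨ha, hmem'⟩
        have hvalid : (([false] : List Bool), w1 (a-1) b).1 ∈ U ∧
            (([false] : List Bool), w1 (a-1) b).2 ∈ U ∧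
            (([false] : List Bool), w1 (a-1) b).1 ≠ (([false] : List Bool), w1 (a-1) b).2 ∧
            (([false] : List Bool), w1 (a-1) b).1 ++ (([false] : List Bool), w1 (a-1) b).2 = w1 a b := by
          refine ⟨mem_false hU, hmem', Ne.symm (w1_ne_falsesingle _ _), ?_⟩
          have : w1 (a-1+1) b = false :: w1 (a-1) b := w1_succ_left (a-1) b
          rw [show a - 1 + 1 = a by omega] at this
          rw [this]
          rfl
        have := huniq _ hvalid
        rw [Prod.ext_iff] at this
        simp only at this
        exact w1_ne_falsesingle (a-1) b (this.2.trans hqf)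
  · intro hx
    apply (hU _).mpr
    refine Or.inr (Or.inr ⟨by rw [w1_length]; omega, ?_⟩)
    rcases hx with ⟨⟨ha, hm⟩, hnR⟩ | ⟨⟨hb, hm⟩, hnL⟩
    · refine ⟨([false], w1 (a-1) b), ⟨mem_false hU, hm, Ne.symm (w1_ne_falsesingle _ _), ?_⟩, ?_⟩
      · have : w1 (a-1+1) b = false :: w1 (a-1) b := w1_succ_left (a-1) b
        rw [show a - 1 + 1 = a by omega] at this
        rw [this]
        rfl
      · rintro ⟨p, q⟩ ⟨hp, hq, hne, heq⟩
        rcases w1_rep hU hp hq heq with ⟨hpf, ha', hqe⟩ | ⟨hqf, hb', hpe⟩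
        · simp only [Prod.ext_iff]
          exact ⟨hpf, hqe⟩
        · exact absurd ⟨hb', hpe ▸ hp⟩ hnR
    · refine ⟨(w1 a (b-1), [false]), ⟨hm, mem_false hU, w1_ne_falsesingle _ _, ?_⟩, ?_⟩
      · have : w1 a (b-1+1) = w1 a (b-1) ++ [false] := w1_succ_right a (b-1)
        rw [show b - 1 + 1 = b by omega] at this
        exact this.symm
      · rintro ⟨p, q⟩ ⟨hp, hq, hne, heq⟩
        rcases w1_rep hU hp hq heq with ⟨hpf, ha', hqe⟩ | ⟨hqf, hb', hpe⟩
        · exact absurd ⟨ha', hqe ▸ hq⟩ hnL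
        · simp only [Prod.ext_iff]
          exact ⟨hpe, hqf⟩

omit hU in
lemma dis_xor : ∀ n a b, a + b ≤ n → 1 ≤ a + b →
    (Dis a b ↔ Xor' (1 ≤ a ∧ Dis (a-1) b) (1 ≤ b ∧ Dis a (b-1))) := by
  intro n
  induction n with
  | zero => intro a b h1 h2; omega
  | succ n ih =>
    intro a b hle h1
    rcases Nat.eq_zero_or_pos a with ha0 | ha0
    · subst ha0
      have hb : 1 ≤ b := by omega
      constructor
      · intro _
        exact Or.inr ⟨⟨hb, dis_zero_left _⟩, fun h => by omega⟩
      · intro _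
        exact dis_zero_left b
    · rcases Nat.eq_zero_or_pos b with hb0 | hb0
      · subst hb0
        constructor
        · intro _
          exact Or.inl ⟨⟨ha0, dis_zero_right _⟩, fun h => by omega⟩
        · intro _
          exact dis_zero_right a
      · -- both ≥ 1 : parity analysis
        have hab : Dis a b ↔ (a % 2 = 0 ∨ b % 2 = 0) ∧ Dis (a/2) (b/2) :=
          dis_pair (by omega) (by omega) (by omega) (by omega)
        rcases Nat.eq_zero_or_pos (a % 2) with hpa | hpa
        · rcases Nat.eq_zero_or_pos (b % 2) with hpb | hpb
          · -- both even
            have ha1 : 1 ≤ a/2 := by omega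
            have hb1 : 1 ≤ b/2 := by omega
            have e1 : Dis (a-1) b ↔ Dis (a/2-1) (b/2) := by
              rw [dis_pair (a₁ := a/2-1) (b₁ := b/2) (x := 1) (y := 0) (by omega) (by omega) (by omega) (by omega)]
              simp
            have e2 : Dis a (b-1) ↔ Dis (a/2) (b/2-1) := by
              rw [dis_pair (a₁ := a/2) (b₁ := b/2-1) (x := 0) (y := 1) (by omega) (by omega) (by omega) (by omega)]
              simp
            have e0 : Dis a b ↔ Dis (a/2) (b/2) := by
              rw [hab]; simp [hpa]
            rw [e0, e1, e2]
            have := ih (a/2) (b/2) (by omega) (by omega)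
            rw [this]
            constructor
            · rintro (⟨⟨_, h⟩, hn⟩ | ⟨⟨_, h⟩, hn⟩)
              · exact Or.inl ⟨⟨by omega, h⟩, fun hc => hn ⟨hb1, hc.2⟩⟩
              · exact Or.inr ⟨⟨by omega, h⟩, fun hc => hn ⟨ha1, hc.2⟩⟩
            · rintro (⟨⟨_, h⟩, hn⟩ | ⟨⟨_, h⟩, hn⟩)
              · exact Or.inl ⟨⟨ha1, h⟩, fun hc => hn ⟨by omega, hc.2⟩⟩
              · exact Or.inr ⟨⟨hb1, h⟩, fun hc => hn ⟨by omega, hc.2⟩⟩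
          · -- a even, b odd
            have e0 : Dis a b ↔ Dis (a/2) (b/2) := by
              rw [hab]; simp [hpa]
            have e1 : Dis (a-1) b ↔ False := by
              rw [dis_pair (a₁ := a/2-1) (b₁ := b/2) (x := 1) (y := 1)
                (by omega) (by omega) (by omega) (by omega)]
              simp
            have e2 : Dis a (b-1) ↔ Dis (a/2) (b/2) := by
              rw [dis_pair (a₁ := a/2) (b₁ := b/2) (x := 0) (y := 0) (by omega) (by omega) (by omega) (by omega)]
              simp
            rw [e0, e1, e2]
            constructor
            · intro h
              exact Or.inr ⟨⟨hb0, h⟩, fun hc => hc.2⟩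
            · rintro (⟨⟨_, h⟩, _⟩ | ⟨⟨_, h⟩, _⟩)
              · exact absurd h (by simp)
              · exact h
        · rcases Nat.eq_zero_or_pos (b % 2) with hpb | hpb
          · -- a odd, b even
            have e0 : Dis a b ↔ Dis (a/2) (b/2) := by
              rw [hab]; simp [hpb]
            have e1 : Dis (a-1) b ↔ Dis (a/2) (b/2) := by
              rw [dis_pair (a₁ := a/2) (b₁ := b/2) (x := 0) (y := 0) (by omega) (by omega) (by omega) (by omega)]
              simp
            have e2 : Dis a (b-1) ↔ False := by
              rw [dis_pair (a₁ := a/2) (b₁ := b/2-1) (x := 1) (y := 1)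
                (by omega) (by omega) (by omega) (by omega)]
              simp
            rw [e0, e1, e2]
            constructor
            · intro h
              exact Or.inl ⟨⟨ha0, h⟩, fun hc => hc.2⟩
            · rintro (⟨⟨_, h⟩, _⟩ | ⟨⟨_, h⟩, _⟩)
              · exact h
              · exact absurd h (by simp)
          · -- both odd
            have e0 : Dis a b ↔ False := by
              rw [hab]; constructor
              · intro h; omega
              · intro h; exact absurd h (by simp)
            have e1 : Dis (a-1) b ↔ Dis (a/2) (b/2) := by
              rw [dis_pair (a₁ := a/2) (b₁ := b/2) (x := 0) (y := 1) (by omega) (by omega) (by omega) (by omega)]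
              simp
            have e2 : Dis a (b-1) ↔ Dis (a/2) (b/2) := by
              rw [dis_pair (a₁ := a/2) (b₁ := b/2) (x := 1) (y := 0) (by omega) (by omega) (by omega) (by omega)]
              simp
            rw [e0, e1, e2]
            constructor
            · intro h; exact h.elim
            · rintro (⟨⟨_, h⟩, hn⟩ | ⟨⟨_, h⟩, hn⟩)
              · exact hn ⟨hb0, h⟩
              · exact hn ⟨ha0, h⟩

lemma w1_mem_iff : ∀ n a b, a + b ≤ n → (w1 a b ∈ U ↔ Dis a b) := by
  intro n
  induction n with
  | zero =>
    intro a b hle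
    have : a = 0 ∧ b = 0 := by omega
    obtain ⟨rfl, rfl⟩ := this
    constructor
    · intro _; exact dis_zero_left 0
    · intro _; exact (show w1 0 0 = [true] by simp [w1]) ▸ mem_true hU
  | succ n ih =>
    intro a b hle
    rcases Nat.eq_zero_or_pos (a + b) with h0 | h0
    · have : a = 0 ∧ b = 0 := by omega
      obtain ⟨rfl, rfl⟩ := this
      constructor
      · intro _; exact dis_zero_left 0
      · intro _; exact (show w1 0 0 = [true] by simp [w1]) ▸ mem_true hU
    · have e1 : (1 ≤ a ∧ w1 (a-1) b ∈ U) ↔ (1 ≤ a ∧ Dis (a-1) b) :=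
        and_congr_right fun ha => ih (a-1) b (by omega)
      have e2 : (1 ≤ b ∧ w1 a (b-1) ∈ U) ↔ (1 ≤ b ∧ Dis a (b-1)) :=
        and_congr_right fun hb => ih a (b-1) (by omega)
      rw [w1_mem_rec hU h0]
      unfold Xor'
      rw [e1, e2]
      have := dis_xor (a+b) a b le_rfl h0
      unfold Xor' at this
      exact this.symm

/-- classification of representations of a two-one word -/
lemma w2_rep {A G B : ℕ} {p q : List Bool} (hp : p ∈ U) (hq : q ∈ U)
    (h : p ++ q = w2 A G B) :
    (p = [false] ∧ 1 ≤ A ∧ q = w2 (A-1) G B) ∨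
    (q = [false] ∧ 1 ≤ B ∧ p = w2 A G (B-1)) ∨
    (∃ c d, c + d = G ∧ p = w1 A c ∧ q = w1 d B) := by
  have hcount : p.count true + q.count true = 2 := by
    have := congrArg (List.count true) h
    rw [List.count_append, w2_count] at this
    exact this
  rcases Nat.eq_zero_or_pos (p.count true) with hp0 | hp1
  · -- p has no true
    left
    have hpf : p = [false] := count_true_eq_zero_mem hU hp hp0
    subst hpf
    cases A with
    | zero =>
      exfalso
      simp [w2] at h
    | succ A =>
      rw [w2_succ_left] at h
      simp only [List.cons_append, List.nil_append, List.cons.injEq] at h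
      exact ⟨rfl, by omega, by simpa using h.2⟩
  · rcases Nat.eq_zero_or_pos (q.count true) with hq0 | hq1
    · -- q has no true
      right; left
      have hqf : q = [false] := count_true_eq_zero_mem hU hq hq0
      subst hqf
      cases B with
      | zero =>
        exfalso
        rw [w2_snoc0] at h
        have := (List.append_inj' h (by simp)).2
        simp at this
      | succ B =>
        rw [w2_snoc] at h
        have := List.append_cancel_right h
        exact ⟨rfl, by omega, by simpa using this⟩
    · -- each has exactly one true
      right; right
      have hc1 : p.count true = 1 := by omega
      have hc2 : q.count true = 1 := by omega
      have h' : p ++ q = List.replicate A false ++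
          (true :: (List.replicate G false ++ true :: List.replicate B false)) := h
      rcases List.append_eq_append_iff.mp h' with ⟨a', ha1, ha2⟩ | ⟨c', hc1', hc2'⟩
      · -- replicate A false = p ++ a' : p all false, contradiction
        exfalso
        have : p.count true = 0 := by
          apply List.count_eq_zero.mpr
          intro hmem
          have : true ∈ List.replicate A false := by rw [ha1]; simp [hmem]
          exact absurd (List.eq_of_mem_replicate this) (by simp)
        omega
      · -- p = replicate A false ++ c'
        cases c' with
        | nil =>
          exfalso
          rw [List.append_nil] at hc1'
          have : p.count true = 0 := by
            rw [hc1']; simp [List.count_replicate]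
          omega
        | cons x t =>
          simp only [List.cons_append, List.cons.injEq] at hc2'
          obtain ⟨hx, hrest⟩ := hc2'
          subst hx
          have htc : t.count true = 0 := by
            have := congrArg (List.count true) hc1'
            rw [List.count_append] at this
            simp [List.count_replicate, List.count_cons] at this
            omega
          rcases List.append_eq_append_iff.mp hrest.symm with ⟨a'', hg1, hg2⟩ | ⟨c'', hg1, hg2⟩
          · -- replicate G false = t ++ a''
            obtain ⟨ht, ha'', hlen⟩ := rev_replicate_split hg1.symm
            refine ⟨t.length, G - t.length, by omega, ?_, ?_⟩
            · rw [hc1']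
              conv_lhs => rw [ht]
              rfl
            · rw [hg2]
              conv_lhs => rw [ha'']
              have : a''.length = G - t.length := by omega
              rw [this]
              rfl
          · -- t = replicate G false ++ c''
            cases c'' with
            | nil =>
              rw [List.append_nil] at hg1
              refine ⟨G, 0, by omega, ?_, ?_⟩
              · rw [hc1', hg1]; rfl
              · simp only [List.nil_append] at hg2
                rw [← hg2]; rfl
            | cons y s =>
              exfalso
              simp only [List.cons_append, List.cons.injEq] at hg2
              have : true ∈ t := by
                rw [hg1, ← hg2.1]
                simp
              exact absurd this (List.count_eq_zero.mp htc)

lemma w2_not_mem : ∀ n A G B, A + B ≤ n → A + B < G → w2 A G B ∉ U := by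
  intro n
  induction n with
  | zero =>
    intro A G B hn hlt hmem
    have hA : A = 0 := by omega
    have hB : B = 0 := by omega
    subst hA hB
    rcases (hU _).mp hmem with h | h | ⟨hlen, ⟨p, q⟩, ⟨hp, hq, hne, heq⟩, huniq⟩
    · have := congrArg List.length h
      rw [w2_length] at this
      simp at this
    · have := congrArg List.length h
      rw [w2_length] at this
      simp at this
    · rcases w2_rep hU hp hq heq with ⟨_, hA1, _⟩ | ⟨_, hB1, _⟩ | ⟨c, d, hcd, hpe, hqe⟩
      · omega
      · omega
      · -- Sol 0 0 G c with G > 0 : use master to find second solution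
        have hDc : Dis 0 c := dis_zero_left c
        have hsol : Sol 0 0 G c := ⟨by omega, dis_zero_left c, dis_zero_left _⟩
        rcases master (G) 0 0 G c (by omega) (by omega) hsol with ⟨hGeq, _⟩ | ⟨c', ⟨hle', hA', hB'⟩, hne'⟩
        · omega
        · have hp' : w1 0 c' ∈ U := (w1_mem_iff hU (0 + c') 0 c' le_rfl).mpr hA'
          have hq' : w1 (G - c') 0 ∈ U :=
            (w1_mem_iff hU ((G - c') + 0) (G - c') 0 le_rfl).mpr (dis_symm hB')
          have hprod : w1 0 c' ++ w1 (G - c') 0 = w2 0 G 0 := by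
            rw [w1_append]
            congr 1
            omega
          have hnepq : w1 0 c' ≠ w1 (G - c') 0 := by
            intro hcon
            obtain ⟨h1, h2⟩ := w1_inj 0 hcon
            omega
          have := huniq (w1 0 c', w1 (G - c') 0) ⟨hp', hq', hnepq, hprod⟩
          rw [Prod.ext_iff] at this
          simp only at this
          have := w1_inj 0 (this.1.trans hpe)
          omega
  | succ n ih =>
    intro A G B hn hlt hmem
    rcases (hU _).mp hmem with h | h | ⟨hlen, ⟨p, q⟩, ⟨hp, hq, hne, heq⟩, huniq⟩
    · have := congrArg List.length h
      rw [w2_length] at this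
      simp at this
    · have := congrArg List.length h
      rw [w2_length] at this
      simp at this
    · rcases w2_rep hU hp hq heq with ⟨hpf, hA1, hqe⟩ | ⟨hqf, hB1, hpe⟩ | ⟨c, d, hcd, hpe, hqe⟩
      · exact ih (A-1) G B (by omega) (by omega) (hqe ▸ hq)
      · exact ih A G (B-1) (by omega) (by omega) (hpe ▸ hp)
      · have hDAc : Dis A c := (w1_mem_iff hU (A + c) A c le_rfl).mp (hpe ▸ hp)
        have hDdB : Dis d B := (w1_mem_iff hU (d + B) d B le_rfl).mp (hqe ▸ hq)
        have hsol : Sol A B G c := ⟨by omega, hDAc, by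
          rw [show G - c = d by omega]; exact dis_symm hDdB⟩
        rcases master (A+B+G) A B G c le_rfl (by omega) hsol with ⟨hGeq, _⟩ | ⟨c', ⟨hle', hA', hB'⟩, hne'⟩
        · omega
        · have hp' : w1 A c' ∈ U := (w1_mem_iff hU (A + c') A c' le_rfl).mpr hA'
          have hq' : w1 (G - c') B ∈ U :=
            (w1_mem_iff hU ((G - c') + B) (G - c') B le_rfl).mpr (dis_symm hB')
          have hprod : w1 A c' ++ w1 (G - c') B = w2 A G B := by
            rw [w1_append]
            congr 1
            omega
          have hnepq : w1 A c' ≠ w1 (G - c') B := by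
            intro hcon
            obtain ⟨h1, h2⟩ := w1_inj A hcon
            omega
          have := huniq (w1 A c', w1 (G - c') B) ⟨hp', hq', hnepq, hprod⟩
          rw [Prod.ext_iff] at this
          simp only at this
          have := w1_inj A (this.1.trans hpe)
          omega

end Ulam

theorem ulam_two_ones_gap (U : Set (List Bool)) (hU : IsUlamFamily U)
    (n i1 i2 : ℕ) (hi1 : 1 ≤ i1) (h12 : i1 < i2) (h2n : i2 ≤ n) (hn : 2 ≤ n)
    (u : List Bool)
    (hu : u = List.replicate (i1 - 1) false ++
        true :: (List.replicate (i2 - i1 - 1) false ++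
          true :: List.replicate (n - i2) false))
    (hmem : u ∈ U) :
    2 * (i2 - i1) ≤ n := by
  by_contra hcon
  push_neg at hcon
  have hu2 : u = w2 (i1 - 1) (i2 - i1 - 1) (n - i2) := hu
  have hlt : (i1 - 1) + (n - i2) < i2 - i1 - 1 := by omega
  exact w2_not_mem hU ((i1-1) + (n-i2)) (i1-1) (i2-i1-1) (n-i2) le_rfl hlt (hu2 ▸ hmem)
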